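/- For complex numbers α, β, the polynomial x⁶ + αx⁴ + βx² + 1 ∈ ℂ[x] is squarefree if and only if 4(α³ + β³) − α²β² − 18αβ + 27 ≠ 0. -/

import Mathlib

open Polynomial

lemma cubic_factor (p q r : ℂ) :
    ∃ a b c : ℂ, (X ^ 3 + C p * X ^ 2 + C q * X + C r : ℂ[X]) =
      (X - C a) * ((X - C b) * (X - C c)) := by
  set g : ℂ[X] := X ^ 3 + C p * X ^ 2 + C q * X + C r with hgdef
  have hmon : g.Monic := by unfold g; monicity!
  have hgn : g.natDegree = 3 := by unfold g; compute_degree!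
  obtain ⟨a, ha⟩ := Complex.isAlgClosed.exists_root g
    (by rw [degree_eq_natDegree hmon.ne_zero, hgn]; norm_num)
  obtain ⟨q1, hq1⟩ := (dvd_iff_isRoot).mpr ha
  have hm1 : q1.Monic := (monic_X_sub_C a).of_mul_monic_left (hq1 ▸ hmon)
  have hq1n : q1.natDegree = 2 := by
    have h := congrArg natDegree hq1
    rw [natDegree_mul (X_sub_C_ne_zero a) hm1.ne_zero, natDegree_X_sub_C, hgn] at h
    omega
  obtain ⟨b, hb⟩ := Complex.isAlgClosed.exists_root q1
    (by rw [degree_eq_natDegree hm1.ne_zero, hq1n]; norm_num)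
  obtain ⟨q2, hq2⟩ := (dvd_iff_isRoot).mpr hb
  have hm2 : q2.Monic := (monic_X_sub_C b).of_mul_monic_left (hq2 ▸ hm1)
  have hq2n : q2.natDegree = 1 := by
    have h := congrArg natDegree hq2
    rw [natDegree_mul (X_sub_C_ne_zero b) hm2.ne_zero, natDegree_X_sub_C, hq1n] at h
    omega
  obtain ⟨w, hw⟩ : ∃ w, q2 = X - C w :=
    ⟨-q2.coeff 0, by rw [map_neg, sub_neg_eq_add]; exact hm2.eq_X_add_C hq2n⟩
  exact ⟨a, b, w, by rw [hq1, hq2, hw]⟩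

lemma coprime_sq_sub (a b : ℂ) (h : a ≠ b) :
    IsCoprime (X ^ 2 - C a : ℂ[X]) (X ^ 2 - C b) := by
  refine ⟨C (b - a)⁻¹, -C (b - a)⁻¹, ?_⟩
  have hne : b - a ≠ 0 := sub_ne_zero.mpr (Ne.symm h)
  have : (C (b - a)⁻¹ : ℂ[X]) * C (b - a) = 1 := by
    rw [← C_mul, inv_mul_cancel₀ hne, C_1]
  calc C (b - a)⁻¹ * (X ^ 2 - C a) + -C (b - a)⁻¹ * (X ^ 2 - C b)
      = C (b - a)⁻¹ * (C b - C a) := by ring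
    _ = 1 := by rw [← C_sub]; exact this

theorem squarefree_sextic_iff (α β : ℂ) :
    Squarefree (X ^ 6 + C α * X ^ 4 + C β * X ^ 2 + 1 : ℂ[X]) ↔
      4 * (α ^ 3 + β ^ 3) - α ^ 2 * β ^ 2 - 18 * α * β + 27 ≠ 0 := by
  obtain ⟨a, b, c, hg⟩ := cubic_factor α β 1
  -- coefficient relations via evaluation
  have e0 := congrArg (eval 0) hg
  have e1 := congrArg (eval 1) hg
  have em1 := congrArg (eval (-1)) hg
  simp only [eval_add, eval_mul, eval_sub, eval_pow, eval_X, eval_C] at e0 e1 em1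
  have h0 : a * b * c = -1 := by linear_combination e0
  have hα : α = -(a + b + c) := by linear_combination (e1 + em1) / 2 - h0
  have hβ : β = a * b + a * c + b * c := by linear_combination (e1 - em1) / 2
  -- the sextic factors
  have hf : (X ^ 6 + C α * X ^ 4 + C β * X ^ 2 + 1 : ℂ[X]) =
      (X ^ 2 - C a) * ((X ^ 2 - C b) * (X ^ 2 - C c)) := by
    have h := congrArg (fun p : ℂ[X] => p.comp (X ^ 2)) hg
    simpa only [add_comp, mul_comp, sub_comp, pow_comp, X_comp, C_comp, one_comp,
      ← pow_mul, C_1, Nat.reduceMul] using h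
  -- discriminant identity
  have hX : 4 * (α ^ 3 + β ^ 3) - α ^ 2 * β ^ 2 - 18 * α * β + 27 =
      -((a - b) * ((b - c) * (a - c))) ^ 2 := by
    rw [hα, hβ]
    linear_combination (-4 * (a + b + c) ^ 3 + 18 * (a + b + c) * (a * b + a * c + b * c)
      + 27 * (1 - a * b * c)) * h0
  rw [hX]
  have hunit : ∀ x : ℂ, ¬ IsUnit (X ^ 2 - C x : ℂ[X]) := by
    intro x h
    have hd := degree_X_pow_sub_C (by norm_num : 0 < 2) x
    have := degree_eq_zero_of_isUnit h
    rw [hd] at this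
    norm_num at this
  constructor
  · intro hsf hzero
    have hΔ : (a - b) * ((b - c) * (a - c)) = 0 := by
      have h2 : ((a - b) * ((b - c) * (a - c))) ^ 2 = 0 := neg_eq_zero.mp hzero
      exact pow_eq_zero_iff (by norm_num) |>.mp h2
    rcases mul_eq_zero.mp hΔ with h | h
    · have hab : a = b := sub_eq_zero.mp h
      exact hunit a (hsf (X ^ 2 - C a) ⟨X ^ 2 - C c, by rw [hf, ← hab]; ring⟩)
    · rcases mul_eq_zero.mp h with h' | h'
      · have hbc : b = c := sub_eq_zero.mp h'
        exact hunit b (hsf (X ^ 2 - C b) ⟨X ^ 2 - C a, by rw [hf, ← hbc]; ring⟩)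
      · have hac : a = c := sub_eq_zero.mp h'
        exact hunit a (hsf (X ^ 2 - C a) ⟨X ^ 2 - C b, by rw [hf, ← hac]; ring⟩)
  · intro hne
    have hΔ : (a - b) * ((b - c) * (a - c)) ≠ 0 := by
      intro h; exact hne (by rw [h]; ring)
    obtain ⟨hab, hbc, hac⟩ : a - b ≠ 0 ∧ (b - c ≠ 0 ∧ a - c ≠ 0) := by
      rcases mul_ne_zero_iff.mp hΔ with ⟨h1, h2⟩
      exact ⟨h1, mul_ne_zero_iff.mp h2⟩
    have ha0 : a ≠ 0 := fun h => by rw [h] at h0; simp at h0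
    have hb0 : b ≠ 0 := fun h => by rw [h] at h0; simp at h0
    have hc0 : c ≠ 0 := fun h => by rw [h] at h0; simp at h0
    have h2 : ((2 : ℕ) : ℂ) ≠ 0 := by norm_num
    have sa := separable_X_pow_sub_C a h2 ha0
    have sb := separable_X_pow_sub_C b h2 hb0
    have sc := separable_X_pow_sub_C c h2 hc0
    have cbc := coprime_sq_sub b c (sub_ne_zero.mp hbc)
    have cab := coprime_sq_sub a b (sub_ne_zero.mp hab)
    have cac := coprime_sq_sub a c (sub_ne_zero.mp hac)
    have sep : ((X ^ 2 - C a) * ((X ^ 2 - C b) * (X ^ 2 - C c)) : ℂ[X]).Separable :=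
      sa.mul (sb.mul sc cbc) (cab.mul_right cac)
    rw [hf]
    exact sep.squarefree
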